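/- Let f ∈ L¹(ℝ), let m be a continuous linear functional on L^∞(ℝ), and let φ : ℝ → ℝ be bounded and uniformly continuous. For t ∈ ℝ let φ_t(x) = φ(x+t), regarded as an element of L^∞(ℝ). Then m(f⋆φ) = ∫_ℝ m(φ_t) f(−t) dt, where the integrand t ↦ m(φ_t) is a bounded continuous function so the integral exists. -/

import Mathlib

open MeasureTheory Filter
open scoped ENNReal NNReal

/-- The convolution `(f⋆φ)(x) = ∫ φ(x-t) f(t) dt`. -/
noncomputable def conv (f φ : ℝ → ℝ) (x : ℝ) : ℝ := ∫ t : ℝ, φ (x - t) * f t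

namespace ClfConvAux

/-- Elements of `L^∞` are a.e. bounded by their norm. -/
lemma Linf_ae_bound (u : Lp ℝ ⊤ (volume : Measure ℝ)) :
    ∀ᵐ x ∂(volume : Measure ℝ), ‖u x‖ ≤ ‖u‖ := by
  have h := enorm_ae_le_eLpNormEssSup (⇑u) (volume : Measure ℝ)
  have hne : eLpNormEssSup (⇑u) (volume : Measure ℝ) ≠ ⊤ := by
    have := Lp.eLpNorm_ne_top u
    rwa [eLpNorm_exponent_top] at this
  filter_upwards [h] with x hx
  have : ‖u x‖ = ((‖u x‖₊ : ℝ≥0∞)).toReal := by simp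
  rw [this, Lp.norm_def, eLpNorm_exponent_top]
  exact ENNReal.toReal_mono hne hx

/-- Norm bound for `L^∞` elements from an a.e. pointwise bound. -/
lemma Linf_norm_le (u : Lp ℝ ⊤ (volume : Measure ℝ)) {C : ℝ} (hC : 0 ≤ C)
    (h : ∀ᵐ x ∂(volume : Measure ℝ), ‖u x‖ ≤ C) : ‖u‖ ≤ C := by
  rw [Lp.norm_def, eLpNorm_exponent_top]
  exact ENNReal.toReal_le_of_le_ofReal hC (eLpNormEssSup_le_of_ae_bound h)

lemma Linf_integrableOn (u : Lp ℝ ⊤ (volume : Measure ℝ)) {s : Set ℝ}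
    (hfin : volume s < ⊤) : IntegrableOn (⇑u) s volume := by
  refine Integrable.mono'
    ((integrableOn_const hfin.ne : IntegrableOn (fun _ : ℝ => ‖u‖) s volume))
    ((Lp.aestronglyMeasurable u).restrict) ?_
  exact ae_restrict_of_ae (Linf_ae_bound u)

/-- Integration over a finite-measure set as a continuous linear functional on `L^∞`. -/
noncomputable def msCLM (s : Set ℝ) (hs : MeasurableSet s) (hfin : volume s < ⊤) :
    Lp ℝ ⊤ (volume : Measure ℝ) →L[ℝ] ℝ :=
  LinearMap.mkContinuous
    { toFun := fun u => ∫ x in s, u x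
      map_add' := fun u v => by
        have h1 := Linf_integrableOn u hfin
        have h2 := Linf_integrableOn v hfin
        rw [← integral_add h1 h2]
        refine integral_congr_ae ?_
        filter_upwards [ae_restrict_of_ae (Lp.coeFn_add u v)] with x hx
        simpa using hx
      map_smul' := fun c u => by
        simp only [RingHom.id_apply]
        rw [← integral_smul]
        refine integral_congr_ae ?_
        filter_upwards [ae_restrict_of_ae (Lp.coeFn_smul c u)] with x hx
        simpa using hx }
    (volume s).toReal
    (fun u => by
      have hb : ∀ᵐ x ∂(volume : Measure ℝ), x ∈ s → ‖u x‖ ≤ ‖u‖ := by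
        filter_upwards [Linf_ae_bound u] with x hx _ using hx
      calc ‖∫ x in s, u x‖ ≤ ‖u‖ * (volume s).toReal :=
            norm_setIntegral_le_of_norm_le_const_ae' hfin hb
        _ = (volume s).toReal * ‖u‖ := mul_comm _ _)

lemma msCLM_apply (s : Set ℝ) (hs : MeasurableSet s) (hfin : volume s < ⊤)
    (u : Lp ℝ ⊤ (volume : Measure ℝ)) : msCLM s hs hfin u = ∫ x in s, u x := rfl

end ClfConvAux

open ClfConvAux

theorem clf_conv_eq_integral (f : ℝ → ℝ) (hf : Integrable f)
    (m : Lp ℝ ⊤ (volume : Measure ℝ) →L[ℝ] ℝ)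
    (φ : ℝ → ℝ) (hbdd : ∃ M : ℝ, ∀ x, |φ x| ≤ M) (huc : UniformContinuous φ)
    (Φ : ℝ → Lp ℝ ⊤ (volume : Measure ℝ))
    (hΦ : ∀ t : ℝ, ⇑(Φ t) =ᵐ[volume] fun x => φ (x + t))
    (ψ : Lp ℝ ⊤ (volume : Measure ℝ))
    (hψ : ⇑ψ =ᵐ[volume] fun x => conv f φ x) :
    m ψ = ∫ t : ℝ, m (Φ t) * f (-t) := by
  classical
  obtain ⟨M₀, hM₀⟩ := hbdd
  set M : ℝ := max M₀ 0 with hMdef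
  have hM : ∀ x, |φ x| ≤ M := fun x => (hM₀ x).trans (le_max_left _ _)
  have hM0 : 0 ≤ M := le_max_right _ _
  have hφc : Continuous φ := huc.continuous
  -- integrability of t ↦ f (-t)
  have hfneg : Integrable (fun t : ℝ => f (-t)) volume := by
    have := (Measure.measurePreserving_neg (volume : Measure ℝ)).integrable_comp
      hf.aestronglyMeasurable
    exact this.2 hf
  -- norm bound on Φ
  have hΦnorm : ∀ t, ‖Φ t‖ ≤ M := fun t => by
    refine Linf_norm_le (Φ t) hM0 ?_
    filter_upwards [hΦ t] with x hx
    rw [hx]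
    simpa [Real.norm_eq_abs] using hM (x + t)
  -- continuity of Φ
  have hΦcont : Continuous Φ := by
    rw [Metric.continuous_iff]
    intro t ε hε
    obtain ⟨δ, hδ, hδε⟩ := Metric.uniformContinuous_iff.1 huc (ε / 2) (half_pos hε)
    refine ⟨δ, hδ, fun s hst => ?_⟩
    have key : ‖Φ s - Φ t‖ ≤ ε / 2 := by
      refine Linf_norm_le _ (le_of_lt (half_pos hε)) ?_
      filter_upwards [Lp.coeFn_sub (Φ s) (Φ t), hΦ s, hΦ t] with x hsub hxs hxt
      rw [hsub, Pi.sub_apply, hxs, hxt]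
      have hd : dist (x + s) (x + t) < δ := by
        simpa [Real.dist_eq, add_sub_add_left_eq_sub] using hst
      have := hδε hd
      rw [Real.dist_eq] at this
      exact le_of_lt (by simpa [Real.norm_eq_abs] using this)
    calc dist (Φ s) (Φ t) = ‖Φ s - Φ t‖ := dist_eq_norm _ _
      _ ≤ ε / 2 := key
      _ < ε := half_lt_self hε
  haveI : Fact ((1 : ℝ≥0∞) ≤ ⊤) := ⟨le_top⟩
  -- the L^∞-valued integrand
  set g : ℝ → Lp ℝ ⊤ (volume : Measure ℝ) := fun t => f (-t) • Φ t with hgdef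
  have hg_meas : AEStronglyMeasurable g volume :=
    hfneg.aestronglyMeasurable.smul hΦcont.aestronglyMeasurable
  have hg_int : Integrable g volume := by
    refine Integrable.mono' (hfneg.abs.const_mul M) hg_meas ?_
    refine Eventually.of_forall fun t => ?_
    rw [hgdef]
    calc ‖f (-t) • Φ t‖ = ‖f (-t)‖ * ‖Φ t‖ := norm_smul _ _
      _ ≤ ‖f (-t)‖ * M := by
          exact mul_le_mul_of_nonneg_left (hΦnorm t) (norm_nonneg _)
      _ = M * |f (-t)| := by rw [Real.norm_eq_abs, mul_comm]
  set I : Lp ℝ ⊤ (volume : Measure ℝ) := ∫ t : ℝ, g t with hIdef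
  -- m I equals the RHS
  have hmI : m I = ∫ t : ℝ, m (Φ t) * f (-t) := by
    rw [hIdef, ← ContinuousLinearMap.integral_comp_comm m hg_int]
    refine integral_congr_ae (Eventually.of_forall fun t => ?_)
    rw [hgdef]
    simp [mul_comm]
  -- key step: ψ = I
  have hψI : ψ = I := by
    refine Lp.ext ?_
    have hae : (⇑ψ : ℝ → ℝ) =ᵐ[volume] ⇑I := by
      refine ae_eq_of_forall_setIntegral_eq_of_sigmaFinite
        (fun s _ hfin => Linf_integrableOn ψ hfin)
        (fun s _ hfin => Linf_integrableOn I hfin)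
        (fun s hs hfin => ?_)
      -- RHS: ∫_s I via the CLM
      have hRHS : ∫ x in s, I x = ∫ t : ℝ, f (-t) * ∫ x in s, φ (x + t) := by
        have h1 : ∫ x in s, I x = (msCLM s hs hfin) I := rfl
        rw [h1, hIdef, ← ContinuousLinearMap.integral_comp_comm _ hg_int]
        refine integral_congr_ae (Eventually.of_forall fun t => ?_)
        show (msCLM s hs hfin) (f (-t) • Φ t) = f (-t) * ∫ x in s, φ (x + t)
        rw [(msCLM s hs hfin).map_smul, smul_eq_mul]
        congr 1
        rw [msCLM_apply]
        exact setIntegral_congr_ae hs (by filter_upwards [hΦ t] with x hx _ using hx)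
      -- LHS: ∫_s ψ via Fubini
      have hconv : ∀ x : ℝ, conv f φ x = ∫ t : ℝ, φ (x + t) * f (-t) := by
        intro x
        rw [conv, ← integral_neg_eq_self (fun t : ℝ => φ (x - t) * f t) volume]
        simp [sub_neg_eq_add]
      have hfub : Integrable (Function.uncurry fun (x t : ℝ) => φ (x + t) * f (-t))
          ((volume.restrict s).prod volume) := by
        have hmeas : AEStronglyMeasurable
            (Function.uncurry fun (x t : ℝ) => φ (x + t) * f (-t))
            ((volume.restrict s).prod volume) := by
          refine AEStronglyMeasurable.mul ?_ ?_
          · exact (hφc.comp continuous_add).aestronglyMeasurable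
          · exact hfneg.aestronglyMeasurable.comp_snd
        refine Integrable.mono'
          (((integrableOn_const hfin.ne) :
              Integrable (fun _ : ℝ => M) (volume.restrict s)).mul_prod hfneg.abs)
          hmeas ?_
        refine Eventually.of_forall fun p => ?_
        calc ‖φ (p.1 + p.2) * f (-p.2)‖ = |φ (p.1 + p.2)| * |f (-p.2)| := by
              rw [norm_mul]; rfl
          _ ≤ M * |f (-p.2)| := mul_le_mul_of_nonneg_right (hM _) (abs_nonneg _)
      have hLHS : ∫ x in s, ψ x = ∫ t : ℝ, (∫ x in s, φ (x + t)) * f (-t) := by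
        have h1 : ∫ x in s, ψ x = ∫ x in s, conv f φ x :=
          setIntegral_congr_ae hs (by filter_upwards [hψ] with x hx _ using hx)
        rw [h1]
        have h2 : ∫ x in s, conv f φ x = ∫ x in s, ∫ t : ℝ, φ (x + t) * f (-t) := by
          refine integral_congr_ae (Eventually.of_forall fun x => hconv x)
        rw [h2, integral_integral_swap hfub]
        refine integral_congr_ae (Eventually.of_forall fun t => ?_)
        exact integral_mul_const _ _
      rw [hLHS, hRHS]
      exact integral_congr_ae (Eventually.of_forall fun t => (mul_comm _ _))
    exact hae
  rw [hψI, hmI]
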